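/- Let K be a field, let U and C be finite-dimensional K-vector spaces with dim U = d and dim C = e, let W be a K-vector space, let ρ ∈ ℕ, and let Λ : W → Hom(U, C) be a linear map. Suppose that for every nonzero linear map B : C → U of rank at most ρ there exists w ∈ W with tr(B ∘ Λ(w)) ≠ 0. Then the rank of Λ satisfies dim(range Λ) ≥ min{ρ, d, e} · max{d, e}. -/

import Mathlib

open LinearMap Module

section Aux

variable {K : Type*} [Field K]

/-- The trace pairing as a map `Hom(Y,X) → Dual(Hom(X,Y))`. -/
noncomputable def tPair (K : Type*) [Field K] (X Y : Type*) [AddCommGroup X] [Module K X]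
    [AddCommGroup Y] [Module K Y] :
    (Y →ₗ[K] X) →ₗ[K] Module.Dual K (X →ₗ[K] Y) :=
  (LinearMap.llcomp K (X →ₗ[K] Y) (X →ₗ[K] X) K (LinearMap.trace K X)).comp
    (LinearMap.llcomp K X Y X)

@[simp] lemma tPair_apply {X Y : Type*} [AddCommGroup X] [Module K X]
    [AddCommGroup Y] [Module K Y] (B : Y →ₗ[K] X) (A : X →ₗ[K] Y) :
    tPair K X Y B A = LinearMap.trace K X (B ∘ₗ A) := rfl

lemma tPair_injective {X Y : Type*} [AddCommGroup X] [Module K X]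
    [AddCommGroup Y] [Module K Y] [FiniteDimensional K X] [FiniteDimensional K Y] :
    Function.Injective (tPair K X Y) := by
  rw [← LinearMap.ker_eq_bot, LinearMap.ker_eq_bot']
  intro B hB0
  by_contra hB
  obtain ⟨y, hy⟩ : ∃ y, B y ≠ 0 := by
    by_contra h
    push_neg at h
    exact hB (LinearMap.ext h)
  obtain ⟨g, hg⟩ : ∃ g : Module.Dual K X, g (B y) ≠ 0 := by
    by_contra h
    push_neg at h
    exact hy ((Module.forall_dual_apply_eq_zero_iff K (B y)).mp h)
  have h1 : B ∘ₗ (g.smulRight y) = dualTensorHom K X X (g ⊗ₜ[K] (B y)) := by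
    ext x
    simp
  have h2 : tPair K X Y B (g.smulRight y) = 0 := by rw [hB0]; rfl
  rw [tPair_apply, h1, LinearMap.trace_eq_contract_apply, contractLeft_apply] at h2
  exact hg h2

/-- The trace pairing equivalence `Hom(Y,X) ≃ Dual(Hom(X,Y))`. -/
noncomputable def tEquiv (K : Type*) [Field K] (X Y : Type*) [AddCommGroup X] [Module K X]
    [AddCommGroup Y] [Module K Y] [FiniteDimensional K X] [FiniteDimensional K Y] :
    (Y →ₗ[K] X) ≃ₗ[K] Module.Dual K (X →ₗ[K] Y) :=
  LinearMap.linearEquivOfInjective (tPair K X Y) tPair_injective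
    (by rw [Subspace.dual_finrank_eq, Module.finrank_linearMap, Module.finrank_linearMap,
      mul_comm])

@[simp] lemma tEquiv_apply {X Y : Type*} [AddCommGroup X] [Module K X]
    [AddCommGroup Y] [Module K Y] [FiniteDimensional K X] [FiniteDimensional K Y]
    (B : Y →ₗ[K] X) (A : X →ₗ[K] Y) :
    tEquiv K X Y B A = LinearMap.trace K X (B ∘ₗ A) := rfl

lemma surj_of_dual {X W : Type*} [AddCommGroup X] [Module K X] [AddCommGroup W] [Module K W]
    [FiniteDimensional K X] (F : W →ₗ[K] X)
    (h : ∀ φ : Module.Dual K X, φ ≠ 0 → ∃ w, φ (F w) ≠ 0) : Function.Surjective F := by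
  rw [← LinearMap.range_eq_top]
  by_contra hne
  have hlt : LinearMap.range F < ⊤ := lt_top_iff_ne_top.mpr hne
  have := Submodule.Quotient.nontrivial_iff.mpr hlt.ne
  obtain ⟨x, hx⟩ := exists_ne (0 : X ⧸ LinearMap.range F)
  obtain ⟨g, hg⟩ : ∃ g : Module.Dual K (X ⧸ LinearMap.range F), g x ≠ 0 := by
    by_contra h'
    push_neg at h'
    exact hx ((Module.forall_dual_apply_eq_zero_iff K x).mp h')
  obtain ⟨x₀, rfl⟩ := Submodule.mkQ_surjective _ x
  have hφ : (g ∘ₗ (LinearMap.range F).mkQ) ≠ 0 := by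
    intro h0
    exact hg (by simpa using LinearMap.congr_fun h0 x₀)
  obtain ⟨w, hw⟩ := h _ hφ
  apply hw
  have : F w ∈ LinearMap.range F := ⟨w, rfl⟩
  rw [LinearMap.comp_apply, Submodule.mkQ_apply, (Submodule.Quotient.mk_eq_zero _).mpr this,
    map_zero]

lemma aux_main {U C W X : Type*} [AddCommGroup U] [Module K U] [AddCommGroup C] [Module K C]
    [AddCommGroup W] [Module K W] [AddCommGroup X] [Module K X]
    [FiniteDimensional K U] [FiniteDimensional K C] [FiniteDimensional K X]
    (ρ : ℕ) (Λ : W →ₗ[K] (U →ₗ[K] C))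
    (hB : ∀ B : C →ₗ[K] U, B ≠ 0 → Module.finrank K (LinearMap.range B) ≤ ρ →
      ∃ w : W, LinearMap.trace K U (B ∘ₗ Λ w) ≠ 0)
    (Φ : (U →ₗ[K] C) →ₗ[K] X) (S : Module.Dual K X → (C →ₗ[K] U))
    (hSinj : ∀ φ, φ ≠ 0 → S φ ≠ 0)
    (hrank : ∀ φ, Module.finrank K (LinearMap.range (S φ)) ≤ ρ)
    (htr : ∀ φ A, LinearMap.trace K U (S φ ∘ₗ A) = φ (Φ A)) :
    Module.finrank K X ≤ Module.finrank K (LinearMap.range Λ) := by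
  have hsurj : Function.Surjective (Φ ∘ₗ Λ) := by
    apply surj_of_dual
    intro φ hφ
    obtain ⟨w, hw⟩ := hB (S φ) (hSinj φ hφ) (hrank φ)
    exact ⟨w, by rw [htr] at hw; exact hw⟩
  have h1 : LinearMap.range (Φ ∘ₗ Λ) = ⊤ := LinearMap.range_eq_top.mpr hsurj
  calc Module.finrank K X = Module.finrank K (LinearMap.range (Φ ∘ₗ Λ)) := by
        rw [h1]; exact (finrank_top K X).symm
    _ = Module.finrank K (Submodule.map Φ (LinearMap.range Λ)) := by
        rw [LinearMap.range_comp]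
    _ ≤ Module.finrank K (LinearMap.range Λ) := Submodule.finrank_map_le _ _

lemma exists_submodule_finrank {V : Type*} [AddCommGroup V] [Module K V]
    [FiniteDimensional K V] {r : ℕ} (h : r ≤ Module.finrank K V) :
    ∃ S : Submodule K V, Module.finrank K S = r := by
  let b := Module.finBasis K V
  refine ⟨Submodule.span K (Set.range (b ∘ Fin.castLE h)), ?_⟩
  rw [finrank_span_eq_card (b.linearIndependent.comp _ (Fin.castLE_injective h))]
  simp

end Aux

/-- If `Λ : W → Hom(U, C)` is a linear map such that no nonzero `B : C → U` of rank at
most `ρ` annihilates the image of `Λ` under the trace pairing, then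
`rk Λ ≥ min {ρ, d, e} * max {d, e}` where `d = dim U` and `e = dim C`. -/
theorem stmt_5 {K : Type*} [Field K]
    {U C W : Type*} [AddCommGroup U] [Module K U] [AddCommGroup C] [Module K C]
    [AddCommGroup W] [Module K W]
    [FiniteDimensional K U] [FiniteDimensional K C]
    (d e ρ : ℕ) (hd : Module.finrank K U = d) (he : Module.finrank K C = e)
    (Λ : W →ₗ[K] (U →ₗ[K] C))
    (hB : ∀ B : C →ₗ[K] U, B ≠ 0 → Module.finrank K (LinearMap.range B) ≤ ρ →
      ∃ w : W, LinearMap.trace K U (B ∘ₗ Λ w) ≠ 0) :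
    min ρ (min d e) * max d e ≤ Module.finrank K (LinearMap.range Λ) := by
  rcases le_or_gt d e with hde | hde
  · -- d ≤ e : restrict to a subspace U' ⊆ U of dimension r = min ρ d
    set r := min ρ d with hr
    have hrd : r ≤ Module.finrank K U := hd ▸ min_le_right _ _
    obtain ⟨U', hU'⟩ := exists_submodule_finrank hrd
    have key : Module.finrank K ((U' : Submodule K U) →ₗ[K] C)
        ≤ Module.finrank K (LinearMap.range Λ) := by
      refine aux_main ρ Λ hB (LinearMap.lcomp K C U'.subtype)
        (fun φ => U'.subtype ∘ₗ (tEquiv K (↥U') C).symm φ) ?_ ?_ ?_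
      · intro φ hφ h0
        apply hφ
        have hB0 : (tEquiv K (↥U') C).symm φ = 0 := by
          ext c
          have := LinearMap.congr_fun h0 c
          simpa [Submodule.subtype_apply, Submodule.coe_eq_zero] using this
        have := congrArg (tEquiv K (↥U') C) hB0
        simpa using this
      · intro φ
        rw [LinearMap.range_comp]
        calc Module.finrank K (Submodule.map U'.subtype _)
            ≤ Module.finrank K (LinearMap.range ((tEquiv K (↥U') C).symm φ)) :=
              Submodule.finrank_map_le _ _
          _ ≤ Module.finrank K U' := (LinearMap.range ((tEquiv K (↥U') C).symm φ)).finrank_le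
          _ ≤ ρ := by rw [hU']; exact min_le_left _ _
      · intro φ A
        rw [LinearMap.comp_assoc, LinearMap.trace_comp_comm']
        have : ((tEquiv K (↥U') C).symm φ ∘ₗ A) ∘ₗ U'.subtype
            = (tEquiv K (↥U') C).symm φ ∘ₗ (A ∘ₗ U'.subtype) := by
          rw [LinearMap.comp_assoc]
        rw [this]
        have := tEquiv_apply ((tEquiv K (↥U') C).symm φ) (A ∘ₗ U'.subtype)
        rw [(tEquiv K (↥U') C).apply_symm_apply] at this
        rw [← this]
        rfl
    have hdim : Module.finrank K ((U' : Submodule K U) →ₗ[K] C) = r * e := by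
      rw [Module.finrank_linearMap, hU', he]
    rw [min_eq_left hde, max_eq_right hde, ← hr]
    rw [hdim] at key
    exact key
  · -- e < d : project to a quotient Q of C of dimension r = min ρ e
    set r := min ρ e with hr
    have hre : r ≤ e := min_le_right _ _
    have hsub : e - r ≤ Module.finrank K C := he ▸ Nat.sub_le _ _
    obtain ⟨C'', hC''⟩ := exists_submodule_finrank hsub
    have hQ : Module.finrank K (C ⧸ C'') = r := by
      have := Submodule.finrank_quotient_add_finrank C''
      rw [hC'', he] at this
      omega
    have key : Module.finrank K (U →ₗ[K] (C ⧸ C''))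
        ≤ Module.finrank K (LinearMap.range Λ) := by
      refine aux_main ρ Λ hB (LinearMap.llcomp K U C (C ⧸ C'') C''.mkQ)
        (fun φ => (tEquiv K U (C ⧸ C'')).symm φ ∘ₗ C''.mkQ) ?_ ?_ ?_
      · intro φ hφ h0
        apply hφ
        have hB0 : (tEquiv K U (C ⧸ C'')).symm φ = 0 := by
          ext c
          simpa using LinearMap.congr_fun h0 c
        have := congrArg (tEquiv K U (C ⧸ C'')) hB0
        simpa using this
      · intro φ
        calc Module.finrank K (LinearMap.range ((tEquiv K U (C ⧸ C'')).symm φ ∘ₗ C''.mkQ))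
            ≤ Module.finrank K (LinearMap.range ((tEquiv K U (C ⧸ C'')).symm φ)) :=
              Submodule.finrank_mono (LinearMap.range_comp_le_range _ _)
          _ ≤ Module.finrank K (C ⧸ C'') := LinearMap.finrank_range_le _
          _ ≤ ρ := by rw [hQ]; exact min_le_left _ _
      · intro φ A
        have : ((tEquiv K U (C ⧸ C'')).symm φ ∘ₗ C''.mkQ) ∘ₗ A
            = (tEquiv K U (C ⧸ C'')).symm φ ∘ₗ (C''.mkQ ∘ₗ A) := by
          rw [LinearMap.comp_assoc]
        rw [this]
        have := tEquiv_apply ((tEquiv K U (C ⧸ C'')).symm φ) (C''.mkQ ∘ₗ A)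
        rw [(tEquiv K U (C ⧸ C'')).apply_symm_apply] at this
        rw [← this]
        rfl
    have hdim : Module.finrank K (U →ₗ[K] (C ⧸ C'')) = d * r := by
      rw [Module.finrank_linearMap, hQ, hd]
    rw [min_eq_right (le_of_lt hde), max_eq_left (le_of_lt hde), ← hr]
    rw [hdim] at key
    calc r * d = d * r := mul_comm _ _
      _ ≤ _ := key
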